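/- Every element of the monoid Γ generated by all nonempty intervals in [0,N], subject to the relations ts = st = s when t ⊆ s and ts = st when s and t commute, is represented by a reduced word, unique up to equivalence by commutation. -/

import Mathlib

structure Letter (N : ℕ) where
  lo : ℕ
  hi : ℕ
  lo_le_hi : lo ≤ hi
  hi_le : hi ≤ N

namespace PS

/-- `t` is a (non-strict) subletter of `s`. -/
def Sub {N : ℕ} (t s : Letter N) : Prop := s.lo ≤ t.lo ∧ t.hi ≤ s.hi

/-- `t` is a proper subletter of `s`. -/
def PSub {N : ℕ} (t s : Letter N) : Prop := Sub t s ∧ t ≠ s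

/-- Two letters commute iff they have distance at least 2. -/
def Comm {N : ℕ} (s t : Letter N) : Prop := s.hi + 2 ≤ t.lo ∨ t.hi + 2 ≤ s.lo

abbrev Word (N : ℕ) := List (Letter N)

/-- Commutation step: swap two adjacent commuting letters. -/
def SwapStep {N : ℕ} (u v : Word N) : Prop :=
  ∃ (x y : Word N) (s t : Letter N),
    Comm s t ∧ u = x ++ s :: t :: y ∧ v = x ++ t :: s :: y

/-- Cancellation step: replace an occurrence `s·t` or `t·s` by `s`, when `t ⊆ s`. -/
def CancelStep {N : ℕ} (u v : Word N) : Prop :=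
  ∃ (x y : Word N) (s t : Letter N),
    Sub t s ∧ (u = x ++ s :: t :: y ∨ u = x ++ t :: s :: y) ∧ v = x ++ s :: y

/-- Splitting step: replace an occurrence `s·s` by a (possibly empty) product of
proper subletters of `s`. -/
def SplitStep {N : ℕ} (u v : Word N) : Prop :=
  ∃ (x y : Word N) (s : Letter N) (l : Word N),
    (∀ t ∈ l, PSub t s) ∧ u = x ++ s :: s :: y ∧ v = x ++ l ++ y

/-- Commutation-equivalence of words. -/
def WEquiv {N : ℕ} : Word N → Word N → Prop := Relation.ReflTransGen SwapStep

/-- Reduction: finitely many commutation and cancellation steps. -/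
def Red {N : ℕ} : Word N → Word N → Prop :=
  Relation.ReflTransGen (fun u v => SwapStep u v ∨ CancelStep u v)

/-- Strong reduction: also allowing splitting steps. -/
def SRed {N : ℕ} : Word N → Word N → Prop :=
  Relation.ReflTransGen (fun u v => SwapStep u v ∨ CancelStep u v ∨ SplitStep u v)

/-- The congruence defining the monoid Γ. -/
def GammaRel {N : ℕ} : Word N → Word N → Prop :=
  Relation.EqvGen (fun u v => SwapStep u v ∨ CancelStep u v)

/-- A word is reduced if there is no pair of occurrences `i ≠ j` with `sᵢ ⊆ sⱼ`
such that `sᵢ` commutes with every letter strictly between them. -/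
def Reduced {N : ℕ} (w : Word N) : Prop :=
  ¬ ∃ (x y z : Word N) (a b : Letter N),
      w = x ++ a :: (y ++ b :: z) ∧
      ((Sub a b ∧ ∀ r ∈ y, Comm a r) ∨ (Sub b a ∧ ∀ r ∈ y, Comm b r))

/-- The letter `s` is left-absorbed by the word `v`. -/
def LAbsLetter {N : ℕ} (s : Letter N) (v : Word N) : Prop :=
  ∃ (x : Word N) (t : Letter N) (y : Word N),
    v = x ++ t :: y ∧ Sub s t ∧ ∀ r ∈ x, Comm s r

/-- The letter `s` is properly left-absorbed by the word `v`. -/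
def PLAbsLetter {N : ℕ} (s : Letter N) (v : Word N) : Prop :=
  ∃ (x : Word N) (t : Letter N) (y : Word N),
    v = x ++ t :: y ∧ PSub s t ∧ ∀ r ∈ x, Comm s r

/-- The letter `s` is right-absorbed by the word `w`. -/
def RAbsLetter {N : ℕ} (s : Letter N) (w : Word N) : Prop :=
  ∃ (x : Word N) (t : Letter N) (y : Word N),
    w = x ++ t :: y ∧ Sub s t ∧ ∀ r ∈ y, Comm s r

/-- The letter `s` is properly right-absorbed by the word `w`. -/
def PRAbsLetter {N : ℕ} (s : Letter N) (w : Word N) : Prop :=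
  ∃ (x : Word N) (t : Letter N) (y : Word N),
    w = x ++ t :: y ∧ PSub s t ∧ ∀ r ∈ y, Comm s r

/-- The word `u` is left-absorbed by `v`. -/
def LAbsWord {N : ℕ} (u v : Word N) : Prop := ∀ s ∈ u, LAbsLetter s v

/-- `v` bites `u` from the right: `v` left-absorbs some letter of the final segment of `u`. -/
def BitesRight {N : ℕ} (v u : Word N) : Prop :=
  ∃ (x : Word N) (s : Letter N) (y : Word N),
    u = x ++ s :: y ∧ (∀ r ∈ y, Comm s r) ∧ LAbsLetter s v

end PS
namespace PS

open scoped Classical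

variable {N : ℕ}

theorem Letter.ext' {a b : Letter N} (h1 : a.lo = b.lo) (h2 : a.hi = b.hi) : a = b := by
  cases a; cases b; simp_all

theorem sub_refl (s : Letter N) : Sub s s := ⟨le_refl _, le_refl _⟩

theorem sub_trans {a b c : Letter N} (h1 : Sub a b) (h2 : Sub b c) : Sub a c := by
  unfold Sub at *; omega

theorem sub_antisymm {a b : Letter N} (h1 : Sub a b) (h2 : Sub b a) : a = b := by
  unfold Sub at *; exact Letter.ext' (by omega) (by omega)

theorem comm_symm {a b : Letter N} (h : Comm a b) : Comm b a := by
  unfold Comm at *; omega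

theorem comm_mono {a b c : Letter N} (h : Comm a b) (hs : Sub c b) : Comm a c := by
  unfold Comm Sub at *; omega

theorem comm_mono' {a b c : Letter N} (h : Comm a b) (hs : Sub c a) : Comm c b := by
  unfold Comm Sub at *; omega

theorem comm_mono2 {a b c d : Letter N} (h : Comm a b) (hc : Sub c a) (hd : Sub d b) :
    Comm c d := by
  unfold Comm Sub at *; omega

theorem not_comm_of_sub {a b : Letter N} (h : Sub a b) : ¬ Comm a b := by
  have := a.lo_le_hi; have := b.lo_le_hi; unfold Comm Sub at *; omega

theorem not_comm_of_sub' {a b : Letter N} (h : Sub a b) : ¬ Comm b a := by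
  have := a.lo_le_hi; have := b.lo_le_hi; unfold Comm Sub at *; omega

/-- `a` commutes with every letter of `l`. -/
def Commq (a : Letter N) (l : Word N) : Prop := ∀ x ∈ l, Comm a x

theorem commq_nil (a : Letter N) : Commq a ([] : Word N) := by
  intro x hx; simp at hx

theorem commq_cons {a b : Letter N} {l : Word N} :
    Commq a (b :: l) ↔ Comm a b ∧ Commq a l := by
  simp [Commq]

theorem commq_append {a : Letter N} {l1 l2 : Word N} :
    Commq a (l1 ++ l2) ↔ Commq a l1 ∧ Commq a l2 := by
  simp [Commq, or_imp, forall_and]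

theorem commq_singleton {a b : Letter N} : Commq a [b] ↔ Comm a b := by
  simp [Commq]

theorem commq_mono {a c : Letter N} {l : Word N} (h : Commq a l) (hs : Sub c a) :
    Commq c l := fun x hx => comm_mono' (h x hx) hs

/- ### WEquiv infrastructure -/

theorem swapStep_symm {u v : Word N} (h : SwapStep u v) : SwapStep v u := by
  obtain ⟨x, y, s, t, hc, hu, hv⟩ := h
  exact ⟨x, y, t, s, comm_symm hc, hv, hu⟩

theorem wequiv_refl (u : Word N) : WEquiv u u := Relation.ReflTransGen.refl

theorem wequiv_trans {u v w : Word N} (h1 : WEquiv u v) (h2 : WEquiv v w) : WEquiv u w :=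
  Relation.ReflTransGen.trans h1 h2

theorem wequiv_symm {u v : Word N} (h : WEquiv u v) : WEquiv v u := by
  induction h with
  | refl => exact .refl
  | tail _ h2 ih => exact .trans (.single (swapStep_symm h2)) ih

theorem swapStep_append_left (x : Word N) {u v : Word N} (h : SwapStep u v) :
    SwapStep (x ++ u) (x ++ v) := by
  obtain ⟨p, q, s, t, hc, hu, hv⟩ := h
  exact ⟨x ++ p, q, s, t, hc, by rw [hu, List.append_assoc], by rw [hv, List.append_assoc]⟩

theorem wequiv_append_left (x : Word N) {u v : Word N} (h : WEquiv u v) :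
    WEquiv (x ++ u) (x ++ v) :=
  Relation.ReflTransGen.lift (fun w => x ++ w) (fun _ _ hs => swapStep_append_left x hs) _ _ h

theorem wequiv_cons (a : Letter N) {u v : Word N} (h : WEquiv u v) :
    WEquiv (a :: u) (a :: v) := wequiv_append_left [a] h

theorem wequiv_swap {s t : Letter N} (hc : Comm s t) (x y : Word N) :
    WEquiv (x ++ s :: t :: y) (x ++ t :: s :: y) := .single ⟨x, y, s, t, hc, rfl, rfl⟩

theorem wequiv_swap_nil {s t : Letter N} (hc : Comm s t) (y : Word N) :
    WEquiv (s :: t :: y) (t :: s :: y) := wequiv_swap hc [] y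

theorem wequiv_move {s : Letter N} : ∀ (x : Word N), Commq s x →
    ∀ z : Word N, WEquiv (s :: (x ++ z)) (x ++ s :: z) := by
  intro x
  induction x with
  | nil => intro _ z; exact .refl
  | cons c x' ih =>
    intro h z
    have h1 : Comm s c := h c (by simp)
    have h2 : Commq s x' := fun r hr => h r (by simp [hr])
    exact wequiv_trans (wequiv_swap_nil h1 (x' ++ z)) (wequiv_cons c (ih h2 z))

/- ### GammaRel infrastructure -/

theorem grel_refl (u : Word N) : GammaRel u u := Relation.EqvGen.refl u

theorem grel_symm {u v : Word N} (h : GammaRel u v) : GammaRel v u :=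
  Relation.EqvGen.symm _ _ h

theorem grel_trans {u v w : Word N} (h1 : GammaRel u v) (h2 : GammaRel v w) :
    GammaRel u w := Relation.EqvGen.trans _ _ _ h1 h2

theorem grel_of_wequiv {u v : Word N} (h : WEquiv u v) : GammaRel u v := by
  induction h with
  | refl => exact .refl _
  | tail _ h2 ih => exact .trans _ _ _ ih (.rel _ _ (Or.inl h2))

theorem grel_of_cancel {u v : Word N} (h : CancelStep u v) : GammaRel u v :=
  .rel _ _ (Or.inr h)

theorem cancelStep_append_left (x : Word N) {u v : Word N} (h : CancelStep u v) :
    CancelStep (x ++ u) (x ++ v) := by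
  obtain ⟨p, q, s, t, hs, hu, hv⟩ := h
  refine ⟨x ++ p, q, s, t, hs, ?_, by rw [hv, List.append_assoc]⟩
  rcases hu with h | h
  · exact Or.inl (by rw [h, List.append_assoc])
  · exact Or.inr (by rw [h, List.append_assoc])

theorem grel_append_left (x : Word N) {u v : Word N} (h : GammaRel u v) :
    GammaRel (x ++ u) (x ++ v) := by
  induction h with
  | rel a b h =>
    rcases h with h | h
    · exact .rel _ _ (Or.inl (swapStep_append_left x h))
    · exact .rel _ _ (Or.inr (cancelStep_append_left x h))
  | refl => exact .refl _
  | symm _ _ _ ih => exact .symm _ _ ih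
  | trans _ _ _ _ _ ih1 ih2 => exact .trans _ _ _ ih1 ih2

theorem grel_cons (a : Letter N) {u v : Word N} (h : GammaRel u v) :
    GammaRel (a :: u) (a :: v) := grel_append_left [a] h

/- ### The normalization function -/

/-- Remove from `v` every letter under `s` that commutes with all kept letters before it
(`acc` records the kept letters so far). -/
noncomputable def scrub (s : Letter N) : Word N → Word N → Word N
  | _, [] => []
  | acc, r :: v =>
    if Sub r s ∧ Commq r acc then scrub s acc v else r :: scrub s (acc ++ [r]) v

/-- Insert the letter `s` on the left of the word `v`, reducing. -/
noncomputable def ins (s : Letter N) : Word N → Word N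
  | [] => [s]
  | b :: v =>
    if Sub s b then b :: v
    else if Sub b s then ins s v
    else if Comm s b then b :: ins s v
    else s :: b :: scrub s [b] v

/-- Normal form. -/
noncomputable def nf : Word N → Word N := List.foldr ins []

theorem scrub_nil (s : Letter N) (acc : Word N) : scrub s acc [] = [] := by rw [scrub]

theorem scrub_pos {s r : Letter N} {acc : Word N} (h : Sub r s ∧ Commq r acc) (v : Word N) :
    scrub s acc (r :: v) = scrub s acc v := by rw [scrub, if_pos h]

theorem scrub_neg {s r : Letter N} {acc : Word N} (h : ¬ (Sub r s ∧ Commq r acc)) (v : Word N) :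
    scrub s acc (r :: v) = r :: scrub s (acc ++ [r]) v := by rw [scrub, if_neg h]

theorem ins_nil (s : Letter N) : ins s [] = [s] := by rw [ins]

theorem ins_sub {s b : Letter N} (h : Sub s b) (v : Word N) : ins s (b :: v) = b :: v := by
  rw [ins, if_pos h]

theorem ins_abs {s b : Letter N} (h1 : ¬ Sub s b) (h2 : Sub b s) (v : Word N) :
    ins s (b :: v) = ins s v := by rw [ins, if_neg h1, if_pos h2]

theorem ins_comm {s b : Letter N} (h1 : ¬ Sub s b) (h2 : ¬ Sub b s) (h3 : Comm s b)
    (v : Word N) : ins s (b :: v) = b :: ins s v := by rw [ins, if_neg h1, if_neg h2, if_pos h3]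

theorem ins_stuck {s b : Letter N} (h1 : ¬ Sub s b) (h2 : ¬ Sub b s) (h3 : ¬ Comm s b)
    (v : Word N) : ins s (b :: v) = s :: b :: scrub s [b] v := by
  rw [ins, if_neg h1, if_neg h2, if_neg h3]

theorem nf_nil : nf ([] : Word N) = [] := rfl

theorem nf_cons (s : Letter N) (w : Word N) : nf (s :: w) = ins s (nf w) := rfl

theorem nf_append (x w : Word N) : nf (x ++ w) = List.foldr ins (nf w) x :=
  List.foldr_append

end PS
namespace PS

open scoped Classical

variable {N : ℕ}

theorem scrub_congr {s : Letter N} : ∀ (v a1 a2 : Word N),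
    (∀ x : Letter N, Sub x s → (Commq x a1 ↔ Commq x a2)) →
    scrub s a1 v = scrub s a2 v := by
  intro v
  induction v with
  | nil => intro a1 a2 _; rw [scrub_nil, scrub_nil]
  | cons r v ih =>
    intro a1 a2 H
    by_cases hr : Sub r s ∧ Commq r a1
    · have hr2 : Sub r s ∧ Commq r a2 := ⟨hr.1, (H r hr.1).mp hr.2⟩
      rw [scrub_pos hr, scrub_pos hr2]; exact ih a1 a2 H
    · have hr2 : ¬ (Sub r s ∧ Commq r a2) := fun h => hr ⟨h.1, (H r h.1).mpr h.2⟩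
      rw [scrub_neg hr, scrub_neg hr2]
      congr 1
      refine ih _ _ (fun x hx => ?_)
      rw [commq_append, commq_append]
      exact and_congr (H x hx) Iff.rfl

theorem scrub_noop {s : Letter N} : ∀ (v acc : Word N),
    (∀ (y : Word N) (c : Letter N) (z : Word N),
      v = y ++ c :: z → Sub c s → Commq c acc → Commq c y → False) →
    scrub s acc v = v := by
  intro v
  induction v with
  | nil => intro acc _; rw [scrub_nil]
  | cons r v ih =>
    intro acc H
    have hr : ¬ (Sub r s ∧ Commq r acc) := fun h => H [] r v rfl h.1 h.2 (commq_nil _)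
    rw [scrub_neg hr]
    congr 1
    refine ih _ (fun y c z hv hc hacc hy => ?_)
    have h1 := commq_append.mp hacc
    exact H (r :: y) c z (by rw [hv]; rfl) hc h1.1
      (commq_cons.mpr ⟨commq_singleton.mp h1.2, hy⟩)

theorem scrub_no_rem {s : Letter N} : ∀ (v acc y : Word N) (c : Letter N) (z : Word N),
    scrub s acc v = y ++ c :: z → Sub c s → Commq c acc → Commq c y → False := by
  intro v
  induction v with
  | nil =>
    intro acc y c z h
    rw [scrub_nil] at h
    intro _ _ _
    exact absurd h.symm (by simp)
  | cons r v ih =>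
    intro acc y c z h hc hacc hy
    by_cases hr : Sub r s ∧ Commq r acc
    · rw [scrub_pos hr] at h; exact ih acc y c z h hc hacc hy
    · rw [scrub_neg hr] at h
      cases y with
      | nil =>
        simp only [List.nil_append] at h
        injection h with h1 h2
        subst h1
        exact hr ⟨hc, hacc⟩
      | cons d y' =>
        simp only [List.cons_append] at h
        injection h with h1 h2
        subst h1
        refine ih (acc ++ [r]) y' c z h2 hc ?_ (fun x hx => hy x (by simp [hx]))
        exact commq_append.mpr ⟨hacc, commq_singleton.mpr (hy r (by simp))⟩

theorem scrub_scrub {s t : Letter N} (hts : Sub t s) : ∀ (w accT acc : Word N),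
    (∀ x : Letter N, Sub x t → Commq x accT → Commq x acc) →
    scrub s acc (scrub t accT w) = scrub s acc w := by
  intro w
  induction w with
  | nil => intro accT acc _; simp [scrub_nil]
  | cons r w ih =>
    intro accT acc H
    by_cases h1 : Sub r t ∧ Commq r accT
    · have h2 : Sub r s ∧ Commq r acc := ⟨sub_trans h1.1 hts, H r h1.1 h1.2⟩
      rw [scrub_pos h1, scrub_pos h2]
      exact ih accT acc H
    · rw [scrub_neg h1]
      by_cases h2 : Sub r s ∧ Commq r acc
      · rw [scrub_pos h2, scrub_pos h2]
        exact ih _ _ (fun x hx hxT => H x hx (commq_append.mp hxT).1)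
      · rw [scrub_neg h2, scrub_neg h2]
        congr 1
        refine ih _ _ (fun x hx hxT => ?_)
        have h3 := commq_append.mp hxT
        exact commq_append.mpr ⟨H x hx h3.1, h3.2⟩

theorem scrub_comm_scrub {s t : Letter N} (hst : Comm s t) : ∀ (w A B : Word N),
    scrub s A (scrub t B w) = scrub t B (scrub s A w) := by
  intro w
  induction w with
  | nil => intro A B; simp [scrub_nil]
  | cons r w ih =>
    intro A B
    have hnot : ¬ (Sub r s ∧ Sub r t) := fun h =>
      not_comm_of_sub (sub_refl r) (comm_mono2 hst h.1 h.2)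
    by_cases h1 : Sub r t ∧ Commq r B
    · have h2 : ¬ (Sub r s ∧ Commq r A) := fun h => hnot ⟨h.1, h1.1⟩
      have congA : scrub s (A ++ [r]) w = scrub s A w := by
        refine scrub_congr _ _ _ (fun x hx => ?_)
        rw [commq_append]
        have : Comm x r := comm_mono2 (comm_symm hst)
          (by exact h1.1) hx |> comm_symm
        simp [commq_singleton, this]
      have L : scrub s A (scrub t B (r :: w)) = scrub s A (scrub t B w) := by
        rw [scrub_pos h1]
      have R : scrub t B (scrub s A (r :: w)) = scrub t B (scrub s A w) := by
        rw [scrub_neg h2, scrub_pos h1, congA]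
      rw [L, R]; exact ih A B
    · by_cases h2 : Sub r s ∧ Commq r A
      · have h1' : ¬ (Sub r t ∧ Commq r B) := h1
        have congB : scrub t (B ++ [r]) w = scrub t B w := by
          refine scrub_congr _ _ _ (fun x hx => ?_)
          rw [commq_append]
          have : Comm x r := comm_mono2 hst h2.1 hx |> comm_symm
          simp [commq_singleton, this]
        have L : scrub s A (scrub t B (r :: w)) = scrub s A (scrub t B w) := by
          rw [scrub_neg h1', scrub_pos h2, congB]
        have R : scrub t B (scrub s A (r :: w)) = scrub t B (scrub s A w) := by
          rw [scrub_pos h2]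
        rw [L, R]; exact ih A B
      · have L : scrub s A (scrub t B (r :: w)) =
            r :: scrub s (A ++ [r]) (scrub t (B ++ [r]) w) := by
          rw [scrub_neg h1, scrub_neg h2]
        have R : scrub t B (scrub s A (r :: w)) =
            r :: scrub t (B ++ [r]) (scrub s (A ++ [r]) w) := by
          rw [scrub_neg h2, scrub_neg h1]
        rw [L, R]
        exact congrArg _ (ih (A ++ [r]) (B ++ [r]))

theorem scrub_ins {s t : Letter N} (hts : Sub t s) : ∀ (w acc : Word N), Commq t acc →
    scrub s acc (ins t w) = scrub s acc w := by
  intro w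
  induction w with
  | nil =>
    intro acc hacc
    rw [ins_nil, scrub_pos ⟨hts, hacc⟩]
  | cons b w ih =>
    intro acc hacc
    by_cases c1 : Sub t b
    · rw [ins_sub c1]
    · by_cases c2 : Sub b t
      · rw [ins_abs c1 c2, scrub_pos ⟨sub_trans c2 hts, commq_mono hacc c2⟩]
        exact ih acc hacc
      · by_cases c3 : Comm t b
        · rw [ins_comm c1 c2 c3]
          by_cases hb : Sub b s ∧ Commq b acc
          · rw [scrub_pos hb, scrub_pos hb]; exact ih acc hacc
          · rw [scrub_neg hb, scrub_neg hb]
            exact congrArg _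
              (ih _ (commq_append.mpr ⟨hacc, commq_singleton.mpr c3⟩))
        · rw [ins_stuck c1 c2 c3, scrub_pos ⟨hts, hacc⟩]
          by_cases hb : Sub b s ∧ Commq b acc
          · rw [scrub_pos hb, scrub_pos hb]
            exact scrub_scrub hts w [b] acc (fun x hx _ => commq_mono hacc hx)
          · rw [scrub_neg hb, scrub_neg hb]
            exact congrArg _ (scrub_scrub hts w [b] (acc ++ [b])
              (fun x hx hxb => commq_append.mpr ⟨commq_mono hacc hx, hxb⟩))

theorem ins_scrub {s t : Letter N} (hts : Sub t s) (hst : ¬ Sub s t) :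
    ∀ (w accT : Word N), ins s (scrub t accT w) = ins s w := by
  intro w
  induction w with
  | nil => intro accT; rw [scrub_nil]
  | cons b w ih =>
    intro accT
    by_cases h1 : Sub b t ∧ Commq b accT
    · rw [scrub_pos h1]
      have hsb : ¬ Sub s b := fun h => hst (sub_trans h h1.1)
      rw [ins_abs hsb (sub_trans h1.1 hts)]
      exact ih accT
    · rw [scrub_neg h1]
      by_cases c1 : Sub s b
      · rw [ins_sub c1, ins_sub c1]
        congr 1
        refine scrub_noop _ _ (fun y c z hw hc hacc hy => ?_)
        have hcb : Sub c b := sub_trans (sub_trans hc hts) c1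
        exact not_comm_of_sub hcb (hacc b (by simp))
      · by_cases c2 : Sub b s
        · rw [ins_abs c1 c2, ins_abs c1 c2]; exact ih _
        · by_cases c3 : Comm s b
          · rw [ins_comm c1 c2 c3, ins_comm c1 c2 c3]; exact congrArg _ (ih _)
          · rw [ins_stuck c1 c2 c3, ins_stuck c1 c2 c3]
            refine congrArg _ (congrArg _ ?_)
            exact scrub_scrub hts w (accT ++ [b]) [b]
              (fun x _ hxacc => (commq_append.mp hxacc).2)

theorem scrub_ins_comm {s t : Letter N} (hst : Comm s t) : ∀ (w acc : Word N),
    scrub s acc (ins t w) = ins t (scrub s acc w) := by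
  intro w
  induction w with
  | nil =>
    intro acc
    have ht : ¬ (Sub t s ∧ Commq t acc) := fun h => not_comm_of_sub h.1 (comm_symm hst)
    rw [ins_nil, scrub_neg ht, scrub_nil, scrub_nil, ins_nil]
  | cons b w ih =>
    intro acc
    by_cases c1 : Sub t b
    · have hb : ¬ (Sub b s ∧ Commq b acc) := fun h =>
        not_comm_of_sub (sub_trans c1 h.1) (comm_symm hst)
      rw [ins_sub c1, scrub_neg hb, ins_sub c1]
    · by_cases c2 : Sub b t
      · have hb : ¬ (Sub b s ∧ Commq b acc) := fun h =>
          not_comm_of_sub (sub_refl b) (comm_mono2 hst h.1 c2)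
        rw [ins_abs c1 c2, scrub_neg hb, ins_abs c1 c2]
        have congA : scrub s (acc ++ [b]) w = scrub s acc w := by
          refine scrub_congr _ _ _ (fun x hx => ?_)
          rw [commq_append]
          have : Comm x b := comm_mono2 hst hx c2
          simp [commq_singleton, this]
        rw [congA]
        exact ih acc
      · by_cases c3 : Comm t b
        · rw [ins_comm c1 c2 c3]
          by_cases hb : Sub b s ∧ Commq b acc
          · rw [scrub_pos hb, scrub_pos hb]; exact ih acc
          · rw [scrub_neg hb, scrub_neg hb, ins_comm c1 c2 c3]
            exact congrArg _ (ih _)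
        · rw [ins_stuck c1 c2 c3]
          have ht : ¬ (Sub t s ∧ Commq t acc) := fun h =>
            not_comm_of_sub h.1 (comm_symm hst)
          have hb2 : ∀ a2 : Word N, ¬ (Sub b s ∧ Commq b a2) := fun a2 h =>
            c3 (comm_symm (comm_mono' hst h.1))
          rw [scrub_neg ht, scrub_neg (hb2 _), scrub_neg (hb2 _), ins_stuck c1 c2 c3]
          congr 1
          congr 1
          have congA : scrub s (acc ++ [t] ++ [b]) (scrub t [b] w) =
              scrub s (acc ++ [b]) (scrub t [b] w) := by
            refine scrub_congr _ _ _ (fun x hx => ?_)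
            rw [commq_append, commq_append, commq_append]
            have : Comm x t := comm_mono' hst hx
            simp [commq_singleton, this]
          rw [congA]
          exact scrub_comm_scrub hst w (acc ++ [b]) [b]

end PS
namespace PS

open scoped Classical

variable {N : ℕ}

theorem ins_ins_sub {s t : Letter N} (hts : Sub t s) : ∀ v : Word N,
    ins s (ins t v) = ins s v := by
  intro v
  induction v with
  | nil =>
    by_cases hst : Sub s t
    · have h : s = t := sub_antisymm hst hts
      subst h
      rw [ins_nil, ins_sub (sub_refl s)]
    · rw [ins_nil, ins_nil, ins_abs hst hts, ins_nil]
  | cons b v ih =>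
    by_cases c1 : Sub t b
    · rw [ins_sub c1]
    · by_cases c2 : Sub b t
      · rw [ins_abs c1 c2]
        have hbs : Sub b s := sub_trans c2 hts
        have hsb : ¬ Sub s b := fun h => c1 (by
          have : s = b := sub_antisymm h hbs
          rw [← this]; exact hts)
        rw [ins_abs hsb hbs]
        exact ih
      · by_cases c3 : Comm t b
        · rw [ins_comm c1 c2 c3]
          by_cases d1 : Sub s b
          · exact absurd (comm_symm (comm_mono c3 d1)) (not_comm_of_sub' hts)
          · by_cases d2 : Sub b s
            · rw [ins_abs d1 d2, ins_abs d1 d2]; exact ih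
            · by_cases d3 : Comm s b
              · rw [ins_comm d1 d2 d3, ins_comm d1 d2 d3]; exact congrArg _ ih
              · rw [ins_stuck d1 d2 d3, ins_stuck d1 d2 d3]
                exact congrArg _ (congrArg _
                  (scrub_ins hts v [b] (commq_singleton.mpr c3)))
        · rw [ins_stuck c1 c2 c3]
          by_cases hst : Sub s t
          · have h : s = t := sub_antisymm hst hts
            subst h
            rw [ins_sub (sub_refl s), ins_stuck c1 c2 c3]
          · rw [ins_abs hst hts]
            by_cases d1 : Sub s b
            · exact absurd (sub_trans hts d1) c1
            · by_cases d2 : Sub b s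
              · rw [ins_abs d1 d2, ins_abs d1 d2]
                exact ins_scrub hts hst v [b]
              · by_cases d3 : Comm s b
                · rw [ins_comm d1 d2 d3, ins_comm d1 d2 d3]
                  exact congrArg _ (ins_scrub hts hst v [b])
                · rw [ins_stuck d1 d2 d3, ins_stuck d1 d2 d3]
                  exact congrArg _ (congrArg _
                    (scrub_scrub hts v [b] [b] (fun x _ h => h)))

theorem ins_ins_sub' {s t : Letter N} (hts : Sub t s) : ∀ v : Word N,
    ins t (ins s v) = ins s v := by
  intro v
  induction v with
  | nil => rw [ins_nil, ins_sub hts]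
  | cons b v ih =>
    by_cases c1 : Sub s b
    · rw [ins_sub c1, ins_sub (sub_trans hts c1)]
    · by_cases c2 : Sub b s
      · rw [ins_abs c1 c2]; exact ih
      · by_cases c3 : Comm s b
        · rw [ins_comm c1 c2 c3]
          have e1 : ¬ Sub t b := fun h =>
            not_comm_of_sub (sub_refl t) (comm_mono2 c3 hts h)
          have e2 : ¬ Sub b t := fun h => c2 (sub_trans h hts)
          have e3 : Comm t b := comm_mono' c3 hts
          rw [ins_comm e1 e2 e3]
          exact congrArg _ ih
        · rw [ins_stuck c1 c2 c3, ins_sub hts]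

theorem scrub_swap {s a b : Letter N} (hab : Comm a b) : ∀ (x acc y : Word N),
    WEquiv (scrub s acc (x ++ a :: b :: y)) (scrub s acc (x ++ b :: a :: y)) := by
  intro x
  induction x with
  | nil =>
    intro acc y
    simp only [List.nil_append]
    by_cases ha : Sub a s ∧ Commq a acc
    · by_cases hb : Sub b s ∧ Commq b acc
      · have L : scrub s acc (a :: b :: y) = scrub s acc y := by
          rw [scrub_pos ha, scrub_pos hb]
        have R : scrub s acc (b :: a :: y) = scrub s acc y := by
          rw [scrub_pos hb, scrub_pos ha]
        rw [L, R]; exact wequiv_refl _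
      · have L : scrub s acc (a :: b :: y) = b :: scrub s (acc ++ [b]) y := by
          rw [scrub_pos ha, scrub_neg hb]
        have R : scrub s acc (b :: a :: y) = b :: scrub s (acc ++ [b]) y := by
          rw [scrub_neg hb, scrub_pos ⟨ha.1,
            commq_append.mpr ⟨ha.2, commq_singleton.mpr hab⟩⟩]
        rw [L, R]; exact wequiv_refl _
    · by_cases hb : Sub b s ∧ Commq b acc
      · have L : scrub s acc (a :: b :: y) = a :: scrub s (acc ++ [a]) y := by
          rw [scrub_neg ha, scrub_pos ⟨hb.1,
            commq_append.mpr ⟨hb.2, commq_singleton.mpr (comm_symm hab)⟩⟩]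
        have R : scrub s acc (b :: a :: y) = a :: scrub s (acc ++ [a]) y := by
          rw [scrub_pos hb, scrub_neg ha]
        rw [L, R]; exact wequiv_refl _
      · have ha2 : ¬ (Sub a s ∧ Commq a (acc ++ [b])) := fun hh =>
          ha ⟨hh.1, (commq_append.mp hh.2).1⟩
        have hb2 : ¬ (Sub b s ∧ Commq b (acc ++ [a])) := fun hh =>
          hb ⟨hh.1, (commq_append.mp hh.2).1⟩
        have L : scrub s acc (a :: b :: y) =
            a :: b :: scrub s (acc ++ [a] ++ [b]) y := by
          rw [scrub_neg ha, scrub_neg hb2]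
        have R : scrub s acc (b :: a :: y) =
            b :: a :: scrub s (acc ++ [b] ++ [a]) y := by
          rw [scrub_neg hb, scrub_neg ha2]
        have e : scrub s (acc ++ [a] ++ [b]) y = scrub s (acc ++ [b] ++ [a]) y := by
          refine scrub_congr _ _ _ (fun x hx => ?_)
          simp only [commq_append]
          tauto
        rw [L, R, e]
        exact wequiv_swap_nil hab _
  | cons c x ih =>
    intro acc y
    simp only [List.cons_append]
    by_cases hc : Sub c s ∧ Commq c acc
    · rw [scrub_pos hc, scrub_pos hc]
      exact ih acc y
    · rw [scrub_neg hc, scrub_neg hc]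
      exact wequiv_cons c (ih _ y)

end PS
namespace PS

open scoped Classical

variable {N : ℕ}

theorem ins_swap {s a b : Letter N} (hab : Comm a b) : ∀ (x y : Word N),
    WEquiv (ins s (x ++ a :: b :: y)) (ins s (x ++ b :: a :: y)) := by
  intro x
  induction x with
  | nil =>
    intro y
    simp only [List.nil_append]
    by_cases p1 : Sub s a
    · have q3 : Comm s b := comm_mono' hab p1
      have q1 : ¬ Sub s b := fun h => not_comm_of_sub h q3
      have q2 : ¬ Sub b s := fun h => not_comm_of_sub' h q3
      have L : ins s (a :: b :: y) = a :: b :: y := ins_sub p1 _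
      have R : ins s (b :: a :: y) = b :: a :: y := by
        rw [ins_comm q1 q2 q3, ins_sub p1]
      rw [L, R]; exact wequiv_swap_nil hab y
    · by_cases p2 : Sub a s
      · by_cases q1 : Sub s b
        · exact absurd (comm_mono hab q1) (not_comm_of_sub p2)
        · by_cases q2 : Sub b s
          · have L : ins s (a :: b :: y) = ins s y := by
              rw [ins_abs p1 p2, ins_abs q1 q2]
            have R : ins s (b :: a :: y) = ins s y := by
              rw [ins_abs q1 q2, ins_abs p1 p2]
            rw [L, R]; exact wequiv_refl _
          · by_cases q3 : Comm s b
            · have L : ins s (a :: b :: y) = b :: ins s y := by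
                rw [ins_abs p1 p2, ins_comm q1 q2 q3]
              have R : ins s (b :: a :: y) = b :: ins s y := by
                rw [ins_comm q1 q2 q3, ins_abs p1 p2]
              rw [L, R]; exact wequiv_refl _
            · have L : ins s (a :: b :: y) = s :: b :: scrub s [b] y := by
                rw [ins_abs p1 p2, ins_stuck q1 q2 q3]
              have R : ins s (b :: a :: y) = s :: b :: scrub s [b] y := by
                rw [ins_stuck q1 q2 q3,
                  scrub_pos ⟨p2, commq_singleton.mpr hab⟩]
              rw [L, R]; exact wequiv_refl _
      · by_cases p3 : Comm s a
        · by_cases q1 : Sub s b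
          · have L : ins s (a :: b :: y) = a :: b :: y := by
              rw [ins_comm p1 p2 p3, ins_sub q1]
            have R : ins s (b :: a :: y) = b :: a :: y := ins_sub q1 _
            rw [L, R]; exact wequiv_swap_nil hab y
          · by_cases q2 : Sub b s
            · have L : ins s (a :: b :: y) = a :: ins s y := by
                rw [ins_comm p1 p2 p3, ins_abs q1 q2]
              have R : ins s (b :: a :: y) = a :: ins s y := by
                rw [ins_abs q1 q2, ins_comm p1 p2 p3]
              rw [L, R]; exact wequiv_refl _
            · by_cases q3 : Comm s b
              · have L : ins s (a :: b :: y) = a :: b :: ins s y := by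
                  rw [ins_comm p1 p2 p3, ins_comm q1 q2 q3]
                have R : ins s (b :: a :: y) = b :: a :: ins s y := by
                  rw [ins_comm q1 q2 q3, ins_comm p1 p2 p3]
                rw [L, R]; exact wequiv_swap_nil hab _
              · have L : ins s (a :: b :: y) = a :: s :: b :: scrub s [b] y := by
                  rw [ins_comm p1 p2 p3, ins_stuck q1 q2 q3]
                have R : ins s (b :: a :: y) =
                    s :: b :: a :: scrub s ([b] ++ [a]) y := by
                  rw [ins_stuck q1 q2 q3, scrub_neg (fun h => p2 h.1)]
                have e : scrub s ([b] ++ [a]) y = scrub s [b] y := by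
                  refine scrub_congr _ _ _ (fun x hx => ?_)
                  rw [commq_append]
                  have : Comm x a := comm_mono' p3 hx
                  simp [commq_singleton, this]
                rw [L, R, e]
                exact wequiv_trans (wequiv_swap_nil (comm_symm p3) _)
                  (wequiv_cons s (wequiv_swap_nil hab _))
        · by_cases q1 : Sub s b
          · exact absurd (comm_symm (comm_mono hab q1)) p3
          · by_cases q2 : Sub b s
            · have L : ins s (a :: b :: y) = s :: a :: scrub s [a] y := by
                rw [ins_stuck p1 p2 p3,
                  scrub_pos ⟨q2, commq_singleton.mpr (comm_symm hab)⟩]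
              have R : ins s (b :: a :: y) = s :: a :: scrub s [a] y := by
                rw [ins_abs q1 q2, ins_stuck p1 p2 p3]
              rw [L, R]; exact wequiv_refl _
            · by_cases q3 : Comm s b
              · have L : ins s (a :: b :: y) =
                    s :: a :: b :: scrub s ([a] ++ [b]) y := by
                  rw [ins_stuck p1 p2 p3, scrub_neg (fun h => q2 h.1)]
                have R : ins s (b :: a :: y) = b :: s :: a :: scrub s [a] y := by
                  rw [ins_comm q1 q2 q3, ins_stuck p1 p2 p3]
                have e : scrub s ([a] ++ [b]) y = scrub s [a] y := by
                  refine scrub_congr _ _ _ (fun x hx => ?_)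
                  rw [commq_append]
                  have : Comm x b := comm_mono' q3 hx
                  simp [commq_singleton, this]
                rw [L, R, e]
                refine wequiv_trans (wequiv_cons s (wequiv_swap_nil hab _)) ?_
                exact wequiv_swap_nil q3 _
              · have L : ins s (a :: b :: y) =
                    s :: a :: b :: scrub s ([a] ++ [b]) y := by
                  rw [ins_stuck p1 p2 p3, scrub_neg (fun h => q2 h.1)]
                have R : ins s (b :: a :: y) =
                    s :: b :: a :: scrub s ([b] ++ [a]) y := by
                  rw [ins_stuck q1 q2 q3, scrub_neg (fun h => p2 h.1)]
                have e : scrub s ([a] ++ [b]) y = scrub s ([b] ++ [a]) y := by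
                  refine scrub_congr _ _ _ (fun x hx => ?_)
                  simp only [commq_append]
                  tauto
                rw [L, R, e]
                exact wequiv_cons s (wequiv_swap_nil hab _)
  | cons c x' ih =>
    intro y
    simp only [List.cons_append]
    by_cases r1 : Sub s c
    · rw [ins_sub r1, ins_sub r1]
      exact wequiv_cons c (wequiv_swap hab x' y)
    · by_cases r2 : Sub c s
      · rw [ins_abs r1 r2, ins_abs r1 r2]; exact ih y
      · by_cases r3 : Comm s c
        · rw [ins_comm r1 r2 r3, ins_comm r1 r2 r3]; exact wequiv_cons c (ih y)
        · rw [ins_stuck r1 r2 r3, ins_stuck r1 r2 r3]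
          exact wequiv_cons s (wequiv_cons c (scrub_swap hab x' [c] y))

theorem ins_ins_comm {s t : Letter N} (hst : Comm s t) : ∀ v : Word N,
    WEquiv (ins s (ins t v)) (ins t (ins s v)) := by
  have hts := comm_symm hst
  have nst : ¬ Sub s t := fun h => not_comm_of_sub h hst
  have nts : ¬ Sub t s := fun h => not_comm_of_sub' h hst
  intro v
  induction v with
  | nil =>
    have L : ins s (ins t []) = [t, s] := by
      rw [ins_nil, ins_comm nst nts hst, ins_nil]
    have R : ins t (ins s []) = [s, t] := by
      rw [ins_nil, ins_comm nts nst hts, ins_nil]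
    rw [L, R]; exact wequiv_swap_nil hts []
  | cons b v ih =>
    by_cases c1 : Sub t b
    · rw [ins_sub c1]
      by_cases d1 : Sub s b
      · rw [ins_sub d1, ins_sub c1]; exact wequiv_refl _
      · by_cases d2 : Sub b s
        · exact absurd (sub_trans c1 d2) nts
        · by_cases d3 : Comm s b
          · rw [ins_comm d1 d2 d3, ins_sub c1]; exact wequiv_refl _
          · rw [ins_stuck d1 d2 d3, ins_comm nts nst hts, ins_sub c1]
            exact wequiv_refl _
    · by_cases c2 : Sub b t
      · rw [ins_abs c1 c2]
        by_cases d1 : Sub s b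
        · exact absurd (sub_trans d1 c2) nst
        · by_cases d2 : Sub b s
          · rw [ins_abs d1 d2]; exact ih
          · by_cases d3 : Comm s b
            · rw [ins_comm d1 d2 d3, ins_abs c1 c2]; exact ih
            · exact absurd (comm_mono hst c2) d3
      · by_cases c3 : Comm t b
        · rw [ins_comm c1 c2 c3]
          by_cases d1 : Sub s b
          · rw [ins_sub d1, ins_sub d1, ins_comm c1 c2 c3]; exact wequiv_refl _
          · by_cases d2 : Sub b s
            · rw [ins_abs d1 d2, ins_abs d1 d2]; exact ih
            · by_cases d3 : Comm s b
              · rw [ins_comm d1 d2 d3, ins_comm d1 d2 d3, ins_comm c1 c2 c3]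
                exact wequiv_cons b ih
              · rw [ins_stuck d1 d2 d3, ins_stuck d1 d2 d3,
                  ins_comm nts nst hts, ins_comm c1 c2 c3,
                  scrub_ins_comm hst v [b]]
                exact wequiv_refl _
        · rw [ins_stuck c1 c2 c3]
          by_cases d1 : Sub s b
          · rw [ins_comm nst nts hst, ins_sub d1, ins_sub d1, ins_stuck c1 c2 c3]
            exact wequiv_refl _
          · by_cases d2 : Sub b s
            · exact absurd (comm_mono hts d2) c3
            · by_cases d3 : Comm s b
              · rw [ins_comm nst nts hst, ins_comm d1 d2 d3, ins_comm d1 d2 d3,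
                  ins_stuck c1 c2 c3, scrub_ins_comm hts v [b]]
                exact wequiv_refl _
              · rw [ins_comm nst nts hst, ins_stuck d1 d2 d3, ins_stuck d1 d2 d3,
                  ins_comm nts nst hts, ins_stuck c1 c2 c3,
                  scrub_comm_scrub hst v [b] [b]]
                exact wequiv_swap_nil hts _

theorem ins_wequiv {s : Letter N} {w w' : Word N} (h : WEquiv w w') :
    WEquiv (ins s w) (ins s w') := by
  induction h with
  | refl => exact wequiv_refl _
  | tail _ hstep ih =>
    obtain ⟨x, y, a, b, hc, h1, h2⟩ := hstep
    refine wequiv_trans ih ?_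
    rw [h1, h2]
    exact ins_swap hc x y

end PS
namespace PS

open scoped Classical

variable {N : ℕ}

/- ### GammaRel facts about ins -/

theorem grel_scrub {s : Letter N} : ∀ (v acc : Word N),
    GammaRel (s :: (acc ++ v)) (s :: (acc ++ scrub s acc v)) := by
  intro v
  induction v with
  | nil => intro acc; rw [scrub_nil]; exact grel_refl _
  | cons r v ih =>
    intro acc
    by_cases hr : Sub r s ∧ Commq r acc
    · rw [scrub_pos hr]
      have step1 : WEquiv (s :: (acc ++ r :: v)) (s :: r :: (acc ++ v)) :=
        wequiv_cons s (wequiv_symm (wequiv_move acc hr.2 v))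
      have step2 : CancelStep (s :: r :: (acc ++ v)) (s :: (acc ++ v)) :=
        ⟨[], acc ++ v, s, r, hr.1, Or.inl rfl, rfl⟩
      exact grel_trans (grel_trans (grel_of_wequiv step1) (grel_of_cancel step2)) (ih acc)
    · rw [scrub_neg hr]
      have := ih (acc ++ [r])
      simpa only [List.append_assoc, List.singleton_append] using this

theorem grel_ins (s : Letter N) : ∀ v : Word N, GammaRel (s :: v) (ins s v) := by
  intro v
  induction v with
  | nil => rw [ins_nil]; exact grel_refl _
  | cons b v ih =>
    by_cases c1 : Sub s b
    · rw [ins_sub c1]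
      exact grel_of_cancel ⟨[], v, b, s, c1, Or.inr rfl, rfl⟩
    · by_cases c2 : Sub b s
      · rw [ins_abs c1 c2]
        exact grel_trans (grel_of_cancel ⟨[], v, s, b, c2, Or.inl rfl, rfl⟩) ih
      · by_cases c3 : Comm s b
        · rw [ins_comm c1 c2 c3]
          exact grel_trans (grel_of_wequiv (wequiv_swap_nil c3 v)) (grel_cons b ih)
        · rw [ins_stuck c1 c2 c3]
          exact grel_scrub v [b]

theorem grel_nf : ∀ w : Word N, GammaRel w (nf w) := by
  intro w
  induction w with
  | nil => exact grel_refl _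
  | cons s w ih =>
    rw [nf_cons]
    exact grel_trans (grel_cons s ih) (grel_ins s (nf w))

/- ### Reduced infrastructure -/

/-- Some letter of `w` is under `u` and commutes with everything before it. -/
def Remv (u : Letter N) (w : Word N) : Prop :=
  ∃ (y : Word N) (c : Letter N) (z : Word N), w = y ++ c :: z ∧ Sub c u ∧ Commq c y

theorem reduced_nil : Reduced ([] : Word N) := by
  rintro ⟨x, y, z, a, b, heq, -⟩
  exact absurd heq (by simp)

theorem reduced_cons_iff {s : Letter N} {w : Word N} :
    Reduced (s :: w) ↔ Reduced w ∧ ¬ LAbsLetter s w ∧ ¬ Remv s w := by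
  constructor
  · intro h
    refine ⟨?_, ?_, ?_⟩
    · rintro ⟨x, y, z, a, b, heq, hor⟩
      exact h ⟨s :: x, y, z, a, b, by rw [heq]; rfl, hor⟩
    · rintro ⟨x, t, y, heq, hsub, hcomm⟩
      exact h ⟨[], x, y, s, t, by rw [heq]; rfl, Or.inl ⟨hsub, hcomm⟩⟩
    · rintro ⟨y, c, z, heq, hsub, hcomm⟩
      exact h ⟨[], y, z, s, c, by rw [heq]; rfl, Or.inr ⟨hsub, hcomm⟩⟩
  · rintro ⟨h1, h2, h3⟩ ⟨x, y, z, a, b, heq, hor⟩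
    cases x with
    | nil =>
      simp only [List.nil_append] at heq
      injection heq with e1 e2
      subst e1
      rcases hor with ⟨hs, hc⟩ | ⟨hs, hc⟩
      · exact h2 ⟨y, b, z, e2, hs, hc⟩
      · exact h3 ⟨y, b, z, e2, hs, hc⟩
    | cons c x' =>
      simp only [List.cons_append] at heq
      injection heq with e1 e2
      exact h1 ⟨x', y, z, a, b, e2, hor⟩

theorem labs_nil {u : Letter N} : ¬ LAbsLetter u ([] : Word N) := by
  rintro ⟨x, t, y, heq, -, -⟩
  exact absurd heq (by simp)

theorem remv_nil {u : Letter N} : ¬ Remv u ([] : Word N) := by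
  rintro ⟨y, c, z, heq, -, -⟩
  exact absurd heq (by simp)

theorem labs_cons_elim {u k : Letter N} {w : Word N} (h : LAbsLetter u (k :: w)) :
    Sub u k ∨ (Comm u k ∧ LAbsLetter u w) := by
  obtain ⟨x, t, y, heq, hsub, hcomm⟩ := h
  cases x with
  | nil =>
    simp only [List.nil_append] at heq
    injection heq with e1 e2
    exact Or.inl (by rw [e1]; exact hsub)
  | cons d x1 =>
    simp only [List.cons_append] at heq
    injection heq with e1 e2
    subst e1
    exact Or.inr ⟨hcomm k (by simp),
      ⟨x1, t, y, e2, hsub, fun r hr => hcomm r (by simp [hr])⟩⟩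

theorem labs_cons_of_sub {u k : Letter N} (h : Sub u k) (w : Word N) :
    LAbsLetter u (k :: w) := ⟨[], k, w, rfl, h, by intro r hr; simp at hr⟩

theorem labs_cons_of_labs {u k : Letter N} {w : Word N} (h1 : Comm u k)
    (h2 : LAbsLetter u w) : LAbsLetter u (k :: w) := by
  obtain ⟨x, t, y, heq, hs, hc⟩ := h2
  refine ⟨k :: x, t, y, by rw [heq]; rfl, hs, ?_⟩
  intro r hr
  rcases List.mem_cons.mp hr with hr | hr
  · rw [hr]; exact h1
  · exact hc r hr

theorem remv_cons_elim {u k : Letter N} {w : Word N} (h : Remv u (k :: w)) :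
    Sub k u ∨ ∃ (y : Word N) (c : Letter N) (z : Word N),
      w = y ++ c :: z ∧ Sub c u ∧ Comm c k ∧ Commq c y := by
  obtain ⟨y, c, z, heq, hs, hc⟩ := h
  cases y with
  | nil =>
    simp only [List.nil_append] at heq
    injection heq with e1 e2
    exact Or.inl (by rw [e1]; exact hs)
  | cons d y1 =>
    simp only [List.cons_append] at heq
    injection heq with e1 e2
    subst e1
    exact Or.inr ⟨y1, c, z, e2, hs, hc k (by simp), fun r hr => hc r (by simp [hr])⟩

theorem remv_cons_of_sub {u k : Letter N} (h : Sub k u) (w : Word N) :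
    Remv u (k :: w) := ⟨[], k, w, rfl, h, commq_nil _⟩

theorem remv_cons_of_remv {u k : Letter N} {w : Word N} (h : Remv u w)
    (hk : ∀ c : Letter N, Sub c u → Comm c k) : Remv u (k :: w) := by
  obtain ⟨y, c, z, heq, hs, hc⟩ := h
  exact ⟨k :: y, c, z, by rw [heq]; rfl, hs, commq_cons.mpr ⟨hk c hs, hc⟩⟩

/- ### transfer of absorption witnesses through scrub and ins -/

theorem scrub_decomp {s u t' : Letter N} : ∀ (w acc x y : Word N),
    scrub s acc w = x ++ t' :: y → Commq u x →
    (∀ r : Letter N, Sub r s → Commq r acc → Comm u r) →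
    ∃ x' y', w = x' ++ t' :: y' ∧ Commq u x' := by
  intro w
  induction w with
  | nil =>
    intro acc x y h _ _
    rw [scrub_nil] at h
    exact absurd h.symm (by simp)
  | cons r w ih =>
    intro acc x y h hcx Hacc
    by_cases hr : Sub r s ∧ Commq r acc
    · rw [scrub_pos hr] at h
      obtain ⟨x', y', hw, hcx'⟩ := ih acc x y h hcx Hacc
      exact ⟨r :: x', y', by rw [hw]; rfl, commq_cons.mpr ⟨Hacc r hr.1 hr.2, hcx'⟩⟩
    · rw [scrub_neg hr] at h
      cases x with
      | nil =>
        simp only [List.nil_append] at h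
        injection h with e1 e2
        exact ⟨[], w, by rw [e1]; rfl, commq_nil u⟩
      | cons d x1 =>
        simp only [List.cons_append] at h
        injection h with e1 e2
        subst e1
        obtain ⟨x', y', hw, hcx'⟩ := ih (acc ++ [r]) x1 y e2
          (fun z hz => hcx z (by simp [hz]))
          (fun r2 hr2 hc2 => Hacc r2 hr2 (commq_append.mp hc2).1)
        exact ⟨r :: x', y', by rw [hw]; rfl, commq_cons.mpr ⟨hcx r (by simp), hcx'⟩⟩

theorem labs_scrub_mem {s u : Letter N} {w acc : Word N} (hu : u ∈ acc)
    (h : LAbsLetter u (scrub s acc w)) : LAbsLetter u w := by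
  obtain ⟨x, t, y, heq, hsub, hcomm⟩ := h
  obtain ⟨x', y', hw, hc⟩ := scrub_decomp w acc x y heq hcomm
    (fun r _ hrc => comm_symm (hrc u hu))
  exact ⟨x', t, y', hw, hsub, hc⟩

theorem labs_scrub_comm {s u : Letter N} (hsu : Comm s u) {w acc : Word N}
    (h : LAbsLetter u (scrub s acc w)) : LAbsLetter u w := by
  obtain ⟨x, t, y, heq, hsub, hcomm⟩ := h
  obtain ⟨x', y', hw, hc⟩ := scrub_decomp w acc x y heq hcomm
    (fun r hr _ => comm_symm (comm_mono' hsu hr))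
  exact ⟨x', t, y', hw, hsub, hc⟩

theorem remv_scrub_mem {s u : Letter N} {w acc : Word N} (hu : u ∈ acc)
    (h : Remv u (scrub s acc w)) : Remv u w := by
  obtain ⟨y, c, z, heq, hsub, hcomm⟩ := h
  obtain ⟨x', y', hw, hc⟩ := scrub_decomp w acc y z heq hcomm
    (fun r _ hrc => comm_symm (comm_mono (hrc u hu) hsub))
  exact ⟨x', c, y', hw, hsub, hc⟩

theorem remv_scrub_comm {s u : Letter N} (hsu : Comm s u) {w acc : Word N}
    (h : Remv u (scrub s acc w)) : Remv u w := by
  obtain ⟨y, c, z, heq, hsub, hcomm⟩ := h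
  obtain ⟨x', y', hw, hc⟩ := scrub_decomp w acc y z heq hcomm
    (fun r hr _ => comm_symm (comm_mono2 hsu hr hsub))
  exact ⟨x', c, y', hw, hsub, hc⟩

theorem labs_ins {s u : Letter N} (hsu : Comm s u) : ∀ w : Word N,
    LAbsLetter u (ins s w) → LAbsLetter u w := by
  intro w
  induction w with
  | nil =>
    intro h
    rw [ins_nil] at h
    rcases labs_cons_elim h with h1 | ⟨-, h2⟩
    · exact absurd (comm_symm hsu) (not_comm_of_sub h1)
    · exact absurd h2 labs_nil
  | cons b w ih =>
    intro h
    by_cases c1 : Sub s b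
    · rwa [ins_sub c1] at h
    · by_cases c2 : Sub b s
      · rw [ins_abs c1 c2] at h
        exact labs_cons_of_labs (comm_mono (comm_symm hsu) c2) (ih h)
      · by_cases c3 : Comm s b
        · rw [ins_comm c1 c2 c3] at h
          rcases labs_cons_elim h with h1 | ⟨h1, h2⟩
          · exact labs_cons_of_sub h1 _
          · exact labs_cons_of_labs h1 (ih h2)
        · rw [ins_stuck c1 c2 c3] at h
          rcases labs_cons_elim h with h1 | ⟨-, h2⟩
          · exact absurd (comm_symm hsu) (not_comm_of_sub h1)
          · rcases labs_cons_elim h2 with h3 | ⟨h3, h4⟩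
            · exact labs_cons_of_sub h3 _
            · exact labs_cons_of_labs h3 (labs_scrub_comm hsu h4)

theorem ins_decomp {s c : Letter N} (hsc : Comm s c) : ∀ (w x y : Word N),
    ins s w = x ++ c :: y → Commq c x →
    ∃ x' y', w = x' ++ c :: y' ∧ Commq c x' := by
  intro w
  induction w with
  | nil =>
    intro x y h hcx
    rw [ins_nil] at h
    cases x with
    | nil =>
      simp only [List.nil_append] at h
      injection h with e1 e2
      rw [← e1] at hsc
      exact absurd hsc (not_comm_of_sub (sub_refl s))
    | cons d x1 =>
      simp only [List.cons_append] at h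
      injection h with e1 e2
      exact absurd e2.symm (by simp)
  | cons b w ih =>
    intro x y h hcx
    by_cases c1 : Sub s b
    · rw [ins_sub c1] at h
      exact ⟨x, y, h, hcx⟩
    · by_cases c2 : Sub b s
      · rw [ins_abs c1 c2] at h
        obtain ⟨x', y', hw, hc⟩ := ih x y h hcx
        exact ⟨b :: x', y', by rw [hw]; rfl,
          commq_cons.mpr ⟨comm_symm (comm_mono' hsc c2), hc⟩⟩
      · by_cases c3 : Comm s b
        · rw [ins_comm c1 c2 c3] at h
          cases x with
          | nil =>
            simp only [List.nil_append] at h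
            injection h with e1 e2
            exact ⟨[], w, by rw [e1]; rfl, commq_nil c⟩
          | cons d x1 =>
            simp only [List.cons_append] at h
            injection h with e1 e2
            subst e1
            obtain ⟨x', y', hw, hc⟩ := ih x1 y e2 (fun z hz => hcx z (by simp [hz]))
            exact ⟨b :: x', y', by rw [hw]; rfl,
              commq_cons.mpr ⟨hcx b (by simp), hc⟩⟩
        · rw [ins_stuck c1 c2 c3] at h
          cases x with
          | nil =>
            simp only [List.nil_append] at h
            injection h with e1 e2
            rw [← e1] at hsc
            exact absurd hsc (not_comm_of_sub (sub_refl s))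
          | cons d x1 =>
            simp only [List.cons_append] at h
            injection h with e1 e2
            subst e1
            cases x1 with
            | nil =>
              simp only [List.nil_append] at e2
              injection e2 with e3 e4
              exact ⟨[], w, by rw [e3]; rfl, commq_nil c⟩
            | cons d2 x2 =>
              simp only [List.cons_append] at e2
              injection e2 with e3 e4
              subst e3
              obtain ⟨x', y', hw, hc⟩ := scrub_decomp w [b] x2 y e4
                (fun z hz => hcx z (by simp [hz]))
                (fun r hr _ => comm_symm (comm_mono' hsc hr))
              exact ⟨b :: x', y', by rw [hw]; rfl,
                commq_cons.mpr ⟨hcx b (by simp), hc⟩⟩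

theorem remv_ins {s u : Letter N} (hsu : Comm s u) {w : Word N}
    (h : Remv u (ins s w)) : Remv u w := by
  obtain ⟨y, c, z, heq, hs, hcy⟩ := h
  obtain ⟨x', y', hw, hc⟩ := ins_decomp (comm_mono hsu hs) w y z heq hcy
  exact ⟨x', c, y', hw, hs, hc⟩

/- ### Reducedness of the normal form -/

theorem scrub_reduced {s : Letter N} : ∀ (w acc : Word N),
    Reduced w → Reduced (scrub s acc w) := by
  intro w
  induction w with
  | nil => intro acc _; rw [scrub_nil]; exact reduced_nil
  | cons r w ih =>
    intro acc hred
    obtain ⟨h1, h2, h3⟩ := reduced_cons_iff.mp hred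
    by_cases hr : Sub r s ∧ Commq r acc
    · rw [scrub_pos hr]; exact ih acc h1
    · rw [scrub_neg hr]
      refine reduced_cons_iff.mpr ⟨ih _ h1, ?_, ?_⟩
      · exact fun hl => h2 (labs_scrub_mem (by simp) hl)
      · exact fun hl => h3 (remv_scrub_mem (by simp) hl)

theorem ins_reduced {s : Letter N} : ∀ w : Word N, Reduced w → Reduced (ins s w) := by
  intro w
  induction w with
  | nil =>
    intro _
    rw [ins_nil]
    exact reduced_cons_iff.mpr ⟨reduced_nil, labs_nil, remv_nil⟩
  | cons b w ih =>
    intro hred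
    obtain ⟨h1, h2, h3⟩ := reduced_cons_iff.mp hred
    by_cases c1 : Sub s b
    · rwa [ins_sub c1]
    · by_cases c2 : Sub b s
      · rw [ins_abs c1 c2]; exact ih h1
      · by_cases c3 : Comm s b
        · rw [ins_comm c1 c2 c3]
          exact reduced_cons_iff.mpr ⟨ih h1,
            fun hl => h2 (labs_ins c3 w hl),
            fun hl => h3 (remv_ins c3 hl)⟩
        · rw [ins_stuck c1 c2 c3]
          refine reduced_cons_iff.mpr ⟨reduced_cons_iff.mpr
            ⟨scrub_reduced w [b] h1,
             fun hl => h2 (labs_scrub_mem (by simp) hl),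
             fun hl => h3 (remv_scrub_mem (by simp) hl)⟩, ?_, ?_⟩
          · intro hl
            rcases labs_cons_elim hl with hh | ⟨hh, -⟩
            · exact c1 hh
            · exact c3 hh
          · intro hl
            rcases remv_cons_elim hl with hh | ⟨y, c, z, heq, hs, hcb, hcy⟩
            · exact c2 hh
            · exact scrub_no_rem w [b] y c z heq hs (commq_singleton.mpr hcb) hcy

theorem nf_reduced : ∀ w : Word N, Reduced (nf w) := by
  intro w
  induction w with
  | nil => exact reduced_nil
  | cons s w ih => rw [nf_cons]; exact ins_reduced (nf w) ih

/- ### Reduced words are fixed by ins (up to commutation) -/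

theorem ins_noop {s : Letter N} : ∀ w : Word N,
    ¬ LAbsLetter s w → ¬ Remv s w → WEquiv (ins s w) (s :: w) := by
  intro w
  induction w with
  | nil => intro _ _; rw [ins_nil]; exact wequiv_refl _
  | cons b w ih =>
    intro h2 h3
    by_cases c1 : Sub s b
    · exact absurd (labs_cons_of_sub c1 w) h2
    · by_cases c2 : Sub b s
      · exact absurd (remv_cons_of_sub c2 w) h3
      · by_cases c3 : Comm s b
        · rw [ins_comm c1 c2 c3]
          have ihh := ih (fun hl => h2 (labs_cons_of_labs c3 hl))
            (fun hl => h3 (remv_cons_of_remv hl (fun c hc => comm_mono' c3 hc)))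
          exact wequiv_trans (wequiv_cons b ihh) (wequiv_swap_nil (comm_symm c3) w)
        · rw [ins_stuck c1 c2 c3]
          rw [scrub_noop w [b] (fun y c z heq hc hcb hcy =>
            h3 ⟨b :: y, c, z, by rw [heq]; rfl, hc,
              commq_cons.mpr ⟨commq_singleton.mp hcb, hcy⟩⟩)]
          exact wequiv_refl _

theorem nf_of_reduced : ∀ v : Word N, Reduced v → WEquiv (nf v) v := by
  intro v
  induction v with
  | nil => intro _; exact wequiv_refl _
  | cons s w ih =>
    intro h
    obtain ⟨h1, h2, h3⟩ := reduced_cons_iff.mp h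
    rw [nf_cons]
    exact wequiv_trans (ins_wequiv (ih h1)) (ins_noop w h2 h3)

/- ### nf is invariant under the defining relations -/

theorem nf_step_cancel {u v : Word N} (h : CancelStep u v) : nf u = nf v := by
  obtain ⟨x, y, s, t, hsub, hu, hv⟩ := h
  subst hv
  rcases hu with hu | hu <;> subst hu <;>
    simp only [nf_append, nf_cons]
  · rw [ins_ins_sub hsub]
  · rw [ins_ins_sub' hsub]

theorem foldr_ins_wequiv {p q : Word N} (h : WEquiv p q) : ∀ x : Word N,
    WEquiv (List.foldr ins p x) (List.foldr ins q x) := by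
  intro x
  induction x with
  | nil => exact h
  | cons c x ih => exact ins_wequiv ih

theorem nf_step_swap {u v : Word N} (h : SwapStep u v) : WEquiv (nf u) (nf v) := by
  obtain ⟨x, y, a, b, hc, hu, hv⟩ := h
  subst hu; subst hv
  simp only [nf_append, nf_cons]
  exact foldr_ins_wequiv (ins_ins_comm hc (nf y)) x

theorem nf_grel {u v : Word N} (h : GammaRel u v) : WEquiv (nf u) (nf v) := by
  induction h with
  | rel a b h =>
    rcases h with h | h
    · exact nf_step_swap h
    · rw [nf_step_cancel h]; exact wequiv_refl _
  | refl _ => exact wequiv_refl _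
  | symm _ _ _ ih => exact wequiv_symm ih
  | trans _ _ _ _ _ ih1 ih2 => exact wequiv_trans ih1 ih2

end PS

open PS in
/-- Every element of the monoid Γ is represented by a reduced word, unique up to
commutation-equivalence. -/
theorem gamma_exists_unique_reduced_representative {N : ℕ} (u : Word N) :
    ∃ v : Word N, GammaRel u v ∧ Reduced v ∧
      ∀ v' : Word N, GammaRel u v' → Reduced v' → WEquiv v v' := by
  refine ⟨nf u, grel_nf u, nf_reduced u, ?_⟩
  intro v' h1 h2
  exact wequiv_trans (nf_grel h1) (nf_of_reduced v' h2)
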